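/- Let E be a nonzero Banach space and let *, ⋄ be continuous multiplications on E. Suppose * is unital with unit e_* and that |⋄ − *| ≤ r·‖e_*‖⁻¹ for some constant r with 0 ≤ r < 1. Then ⋄ is unital with unit e_⋄, and with s = 1 + r·(1−r)⁻¹ one has ‖e_⋄ − e_*‖ ≤ s·|⋄ − *|·‖e_*‖² ≤ r·s·‖e_*‖. -/

import Mathlib

/-- Let `E` be a nonzero Banach space, `f, g` continuous multiplications on
`E` with `f` unital with unit `e`.  If `‖g - f‖ ≤ r * ‖e‖⁻¹` for some `0 ≤ r < 1`, then `g`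
is unital with unit `e'`, and with `s = 1 + r * (1 - r)⁻¹` one has
`‖e' - e‖ ≤ s * ‖g - f‖ * ‖e‖^2 ≤ r * s * ‖e‖`. -/
theorem stmt_3
    {E : Type*} [NormedAddCommGroup E] [NormedSpace ℝ E] [CompleteSpace E] [Nontrivial E]
    (f g : E →L[ℝ] E →L[ℝ] E)
    (hf : ∀ x y z : E, f (f x y) z = f x (f y z))
    (hg : ∀ x y z : E, g (g x y) z = g x (g y z))
    (e : E) (he : ∀ x : E, f e x = x ∧ f x e = x)
    (r : ℝ) (hr0 : 0 ≤ r) (hr1 : r < 1)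
    (hd : ‖g - f‖ ≤ r * ‖e‖⁻¹) :
    ∃ e' : E, (∀ x : E, g e' x = x ∧ g x e' = x) ∧
      ‖e' - e‖ ≤ (1 + r * (1 - r)⁻¹) * ‖g - f‖ * ‖e‖ ^ 2 ∧
      (1 + r * (1 - r)⁻¹) * ‖g - f‖ * ‖e‖ ^ 2 ≤ r * (1 + r * (1 - r)⁻¹) * ‖e‖ := by
  classical
  have hene : e ≠ 0 := by
    intro h
    obtain ⟨x, y, hxy⟩ := exists_pair_ne E
    have hx := (he x).2
    have hy := (he y).2
    rw [h] at hx hy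
    simp only [map_zero] at hx hy
    exact hxy (hx.symm.trans hy)
  have hepos : (0 : ℝ) < ‖e‖ := norm_pos_iff.mpr hene
  have hgf : ‖g - f‖ * ‖e‖ ≤ r := by
    calc ‖g - f‖ * ‖e‖ ≤ (r * ‖e‖⁻¹) * ‖e‖ := by
          exact mul_le_mul_of_nonneg_right hd (norm_nonneg e)
      _ = r := by field_simp
  have hfe : f e = 1 := ContinuousLinearMap.ext fun x => (he x).1
  have hfe' : f.flip e = 1 := ContinuousLinearMap.ext fun x => (he x).2
  -- left multiplication by e under g
  have hLnorm : ‖1 - g e‖ ≤ r := by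
    have h1 : (1 : E →L[ℝ] E) - g e = -((g - f) e) := by
      simp [hfe]
    rw [h1, norm_neg]
    calc ‖(g - f) e‖ ≤ ‖g - f‖ * ‖e‖ := (g - f).le_opNorm e
      _ ≤ r := hgf
  have hRnorm : ‖1 - g.flip e‖ ≤ r := by
    have h1 : (1 : E →L[ℝ] E) - g.flip e = -((g - f).flip e) := by
      ext x
      simp [ContinuousLinearMap.flip_apply, (he x).2]
    rw [h1, norm_neg]
    calc ‖(g - f).flip e‖ ≤ ‖(g - f).flip‖ * ‖e‖ := (g - f).flip.le_opNorm e
      _ = ‖g - f‖ * ‖e‖ := by rw [ContinuousLinearMap.opNorm_flip]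
      _ ≤ r := hgf
  have hLlt : ‖1 - g e‖ < 1 := lt_of_le_of_lt hLnorm hr1
  have hRlt : ‖1 - g.flip e‖ < 1 := lt_of_le_of_lt hRnorm hr1
  set u : (E →L[ℝ] E)ˣ := Units.oneSub (1 - g e) hLlt with hu
  set v : (E →L[ℝ] E)ˣ := Units.oneSub (1 - g.flip e) hRlt with hv
  have huval : (u : E →L[ℝ] E) = g e := by simp [hu]
  have hvval : (v : E →L[ℝ] E) = g.flip e := by simp [hv]
  set eL : E := (↑u⁻¹ : E →L[ℝ] E) e with heL
  set eR : E := (↑v⁻¹ : E →L[ℝ] E) e with heR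
  -- eL is a left unit
  have hleft : ∀ x : E, g eL x = x := by
    intro x
    have h1 : g (g e eL) x = g e (g eL x) := hg e eL x
    have h2 : g e eL = e := by
      have := u.mul_inv
      calc g e eL = ((u : E →L[ℝ] E) * (↑u⁻¹ : E →L[ℝ] E)) e := by
            rw [ContinuousLinearMap.mul_apply, huval, heL]
        _ = e := by rw [u.mul_inv]; rfl
    rw [h2] at h1
    -- h1 : g e x = g e (g eL x), i.e. u x = u (g eL x)
    have h3 : (u : E →L[ℝ] E) x = (u : E →L[ℝ] E) (g eL x) := by
      rw [huval]; exact h1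
    have h4 : ((↑u⁻¹ : E →L[ℝ] E) * (u : E →L[ℝ] E)) x
        = ((↑u⁻¹ : E →L[ℝ] E) * (u : E →L[ℝ] E)) (g eL x) := by
      simp only [ContinuousLinearMap.mul_apply, h3]
    rw [u.inv_mul] at h4
    exact (h4.symm : _)
  -- eR is a right unit
  have hright : ∀ x : E, g x eR = x := by
    intro x
    have h1 : g (g x eR) e = g x (g eR e) := hg x eR e
    have h2 : g eR e = e := by
      calc g eR e = ((v : E →L[ℝ] E) * (↑v⁻¹ : E →L[ℝ] E)) e := by
            rw [ContinuousLinearMap.mul_apply, hvval, heR]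
            rfl
        _ = e := by rw [v.mul_inv]; rfl
    rw [h2] at h1
    -- h1 : g (g x eR) e = g x e, i.e. v (g x eR) = v x
    have h3 : (v : E →L[ℝ] E) (g x eR) = (v : E →L[ℝ] E) x := by
      rw [hvval]; exact h1
    have h4 : ((↑v⁻¹ : E →L[ℝ] E) * (v : E →L[ℝ] E)) (g x eR)
        = ((↑v⁻¹ : E →L[ℝ] E) * (v : E →L[ℝ] E)) x := by
      simp only [ContinuousLinearMap.mul_apply, h3]
    rw [v.inv_mul] at h4
    exact h4
  have hLR : eL = eR := by
    have h1 := hleft eR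
    have h2 := hright eL
    rw [h2] at h1
    exact h1
  refine ⟨eL, fun x => ⟨hleft x, by rw [hLR]; exact hright x⟩, ?_, ?_⟩
  · -- norm estimate
    have hinv : ‖(↑u⁻¹ : E →L[ℝ] E)‖ ≤ (1 - r)⁻¹ := by
      have h1 : (↑u⁻¹ : E →L[ℝ] E) = ∑' n : ℕ, (1 - g e) ^ n := rfl
      rw [h1]
      calc ‖∑' n : ℕ, (1 - g e) ^ n‖
          ≤ ‖(1 : E →L[ℝ] E)‖ - 1 + (1 - ‖1 - g e‖)⁻¹ :=
            tsum_geometric_le_of_norm_lt_one _ hLlt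
        _ = (1 - ‖1 - g e‖)⁻¹ := by rw [norm_one]; ring
        _ ≤ (1 - r)⁻¹ := by
            apply inv_anti₀ (by linarith) (by linarith)
    have hkey : eL - e = (1 - g e) eL := by
      have h1 : g e eL = e := by
        calc g e eL = ((u : E →L[ℝ] E) * (↑u⁻¹ : E →L[ℝ] E)) e := by
              rw [ContinuousLinearMap.mul_apply, huval, heL]
          _ = e := by rw [u.mul_inv]; rfl
      simp only [ContinuousLinearMap.sub_apply, ContinuousLinearMap.one_apply, h1]
    have heLnorm : ‖eL‖ ≤ (1 - r)⁻¹ * ‖e‖ := by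
      calc ‖eL‖ = ‖(↑u⁻¹ : E →L[ℝ] E) e‖ := rfl
        _ ≤ ‖(↑u⁻¹ : E →L[ℝ] E)‖ * ‖e‖ := (↑u⁻¹ : E →L[ℝ] E).le_opNorm e
        _ ≤ (1 - r)⁻¹ * ‖e‖ := mul_le_mul_of_nonneg_right hinv (norm_nonneg e)
    have h1mL : ‖1 - g e‖ ≤ ‖g - f‖ * ‖e‖ := by
      have h1 : (1 : E →L[ℝ] E) - g e = -((g - f) e) := by simp [hfe]
      rw [h1, norm_neg]
      exact (g - f).le_opNorm e
    have hne : (1 : ℝ) - r ≠ 0 := by linarith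
    have hs : (1 + r * (1 - r)⁻¹) = (1 - r)⁻¹ := by
      field_simp
      ring
    rw [hs]
    calc ‖eL - e‖ = ‖(1 - g e) eL‖ := by rw [hkey]
      _ ≤ ‖1 - g e‖ * ‖eL‖ := (1 - g e).le_opNorm eL
      _ ≤ (‖g - f‖ * ‖e‖) * ((1 - r)⁻¹ * ‖e‖) := by
          apply mul_le_mul h1mL heLnorm (norm_nonneg eL)
          positivity
      _ = (1 - r)⁻¹ * ‖g - f‖ * ‖e‖ ^ 2 := by ring
  · have hs0 : (0 : ℝ) ≤ 1 + r * (1 - r)⁻¹ := by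
      have : (0:ℝ) ≤ r * (1 - r)⁻¹ := mul_nonneg hr0 (inv_nonneg.mpr (by linarith))
      linarith
    calc (1 + r * (1 - r)⁻¹) * ‖g - f‖ * ‖e‖ ^ 2
        ≤ (1 + r * (1 - r)⁻¹) * (r * ‖e‖⁻¹) * ‖e‖ ^ 2 := by
          exact mul_le_mul_of_nonneg_right (mul_le_mul_of_nonneg_left hd hs0) (pow_nonneg (norm_nonneg e) 2)
      _ = r * (1 + r * (1 - r)⁻¹) * ‖e‖ := by
          have hne : (1 : ℝ) - r ≠ 0 := by linarith
          field_simp
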